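/- arXiv:2007.14500 — 7 statements merged into one kernel-verified Lean document; each statement's English description precedes it below -/
import Mathlib

section
/- In a FIDL-module ⟨A, B, f, i⟩, if G is a filter of A and H is a filter of B, then the set i(H,G) = {x ∈ A : ∃ h ∈ H, ∃ g ∈ G, g ≤ i(h,x)} is a filter of A. -/
def IsLatFilter {α : Type*} [Lattice α] [BoundedOrder α] (F : Set α) : Prop :=
  ⊤ ∈ F ∧ (∀ x y : α, x ∈ F → x ≤ y → y ∈ F) ∧ ∀ x y : α, x ∈ F → y ∈ F → x ⊓ y ∈ F

def IsPrimeLatFilter {α : Type*} [Lattice α] [BoundedOrder α] (F : Set α) : Prop :=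
  IsLatFilter F ∧ F ≠ Set.univ ∧ ∀ x y : α, x ⊔ y ∈ F → x ∈ F ∨ y ∈ F

def IsFIDL {A B : Type*} [DistribLattice A] [BoundedOrder A]
    [DistribLattice B] [BoundedOrder B] (f : A → B → A) (i : B → A → A) : Prop :=
  (∀ x y : A, ∀ b : B, f (x ⊔ y) b = f x b ⊔ f y b) ∧
  (∀ x : A, ∀ b c : B, f x (b ⊔ c) = f x b ⊔ f x c) ∧
  (∀ b : B, f ⊥ b = ⊥) ∧
  (∀ x : A, f x ⊥ = ⊥) ∧
  (∀ b : B, ∀ x y : A, i b (x ⊓ y) = i b x ⊓ i b y) ∧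
  (∀ b c : B, ∀ x : A, i (b ⊔ c) x = i b x ⊓ i c x) ∧
  (∀ b : B, i b ⊤ = ⊤)

def fSet {A B : Type*} [Lattice A] (f : A → B → A) (G : Set A) (H : Set B) : Set A :=
  {x : A | ∃ g ∈ G, ∃ h ∈ H, f g h ≤ x}

def iSet {A B : Type*} [Lattice A] (i : B → A → A) (H : Set B) (G : Set A) : Set A :=
  {x : A | ∃ h ∈ H, ∃ g ∈ G, g ≤ i h x}

theorem stmt_2 {A B : Type*} [DistribLattice A] [BoundedOrder A]
    [DistribLattice B] [BoundedOrder B] (f : A → B → A) (i : B → A → A)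
    (hM : IsFIDL f i) (G : Set A) (H : Set B)
    (hG : IsLatFilter G) (hH : IsLatFilter H) :
    IsLatFilter (iSet i H G) := by
  obtain ⟨-, -, -, -, hmeet, hjoin, htop⟩ := hM
  have hmono : ∀ b : B, ∀ x y : A, x ≤ y → i b x ≤ i b y := by
    intro b x y hxy
    have : i b (x ⊓ y) = i b x ⊓ i b y := hmeet b x y
    rw [inf_eq_left.mpr hxy] at this
    rw [this]; exact inf_le_right
  have hanti : ∀ b c : B, ∀ x : A, b ≤ c → i c x ≤ i b x := by
    intro b c x hbc
    have : i (b ⊔ c) x = i b x ⊓ i c x := hjoin b c x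
    rw [sup_eq_right.mpr hbc] at this
    rw [this]; exact inf_le_left
  refine ⟨⟨⊤, hH.1, ⊤, hG.1, by rw [htop]⟩, ?_, ?_⟩
  · rintro x y ⟨h, hh, g, hg, hle⟩ hxy
    exact ⟨h, hh, g, hg, hle.trans (hmono h x y hxy)⟩
  · rintro x y ⟨h1, hh1, g1, hg1, hle1⟩ ⟨h2, hh2, g2, hg2, hle2⟩
    refine ⟨h1 ⊓ h2, hH.2.2 _ _ hh1 hh2, g1 ⊓ g2, hG.2.2 _ _ hg1 hg2, ?_⟩
    rw [hmeet]
    exact le_inf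
      (inf_le_left.trans (hle1.trans (hanti _ h1 x inf_le_left)))
      (inf_le_right.trans (hle2.trans (hanti _ h2 y inf_le_right)))
end

section
/- Let ⟨A, B, f, i⟩ be a FIDL-module, G a filter of A, H a filter of B, and P a prime filter of A. If f(G,H) ⊆ P, then there exist a prime filter Q of A and a prime filter R of B such that G ⊆ Q, H ⊆ R, and f(Q,R) ⊆ P, where f(Q,R) = {x ∈ A : ∃ q ∈ Q, ∃ r ∈ R, f(q,r) ≤ x}. -/
theorem stmt_3 {A B : Type*} [DistribLattice A] [BoundedOrder A]
    [DistribLattice B] [BoundedOrder B] (f : A → B → A) (i : B → A → A)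
    (hM : IsFIDL f i) (G : Set A) (H : Set B) (P : Set A)
    (hG : IsLatFilter G) (hH : IsLatFilter H) (hP : IsPrimeLatFilter P)
    (hsub : fSet f G H ⊆ P) :
    ∃ Q : Set A, ∃ R : Set B, IsPrimeLatFilter Q ∧ IsPrimeLatFilter R ∧
      G ⊆ Q ∧ H ⊆ R ∧ fSet f Q R ⊆ P := by
  obtain ⟨hf1, hf2, hf3, hf4, -, -, -⟩ := hM
  -- monotonicity of f in each argument
  have fmono1 : ∀ (a b : A) (h : B), a ≤ b → f a h ≤ f b h := by
    intro a b h hab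
    calc f a h ≤ f a h ⊔ f b h := le_sup_left
    _ = f (a ⊔ b) h := (hf1 a b h).symm
    _ = f b h := by rw [sup_eq_right.mpr hab]
  have fmono2 : ∀ (a : A) (b c : B), b ≤ c → f a b ≤ f a c := by
    intro a b c hbc
    calc f a b ≤ f a b ⊔ f a c := le_sup_left
    _ = f a (b ⊔ c) := (hf2 a b c).symm
    _ = f a c := by rw [sup_eq_right.mpr hbc]
  -- the set of candidate pairs
  set S : Set (Set A × Set B) := {p | IsLatFilter p.1 ∧ IsLatFilter p.2 ∧
      G ⊆ p.1 ∧ H ⊆ p.2 ∧ fSet f p.1 p.2 ⊆ P} with hS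
  have hGH : (G, H) ∈ S := ⟨hG, hH, subset_rfl, subset_rfl, hsub⟩
  obtain ⟨m, hle, hmS, hmax⟩ := zorn_le_nonempty₀ S (by
    intro c hcS hchain y hyc
    refine ⟨(⋃ p ∈ c, p.1, ⋃ p ∈ c, p.2), ?_, ?_⟩
    · have mem1 : ∀ {a : A} {p : Set A × Set B}, p ∈ c → a ∈ p.1 → a ∈ ⋃ p ∈ c, p.1 := by
        intro a p hp ha; exact Set.mem_biUnion hp ha
      have mem2 : ∀ {b : B} {p : Set A × Set B}, p ∈ c → b ∈ p.2 → b ∈ ⋃ p ∈ c, p.2 := by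
        intro b p hp hb; exact Set.mem_biUnion hp hb
      refine ⟨⟨?_, ?_, ?_⟩, ⟨?_, ?_, ?_⟩, ?_, ?_, ?_⟩
      · exact mem1 hyc (hcS hyc).1.1
      · rintro a b ha hab
        obtain ⟨_, ⟨p, rfl⟩, _, ⟨hp, rfl⟩, ha⟩ := ha
        exact mem1 hp ((hcS hp).1.2.1 a b ha hab)
      · rintro a b ha hb
        obtain ⟨_, ⟨p, rfl⟩, _, ⟨hp, rfl⟩, ha⟩ := ha
        obtain ⟨_, ⟨q, rfl⟩, _, ⟨hq, rfl⟩, hb⟩ := hb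
        rcases hchain.total hp hq with hpq | hqp
        · exact mem1 hq ((hcS hq).1.2.2 a b (hpq.1 ha) hb)
        · exact mem1 hp ((hcS hp).1.2.2 a b ha (hqp.1 hb))
      · exact mem2 hyc (hcS hyc).2.1.1
      · rintro a b ha hab
        obtain ⟨_, ⟨p, rfl⟩, _, ⟨hp, rfl⟩, ha⟩ := ha
        exact mem2 hp ((hcS hp).2.1.2.1 a b ha hab)
      · rintro a b ha hb
        obtain ⟨_, ⟨p, rfl⟩, _, ⟨hp, rfl⟩, ha⟩ := ha
        obtain ⟨_, ⟨q, rfl⟩, _, ⟨hq, rfl⟩, hb⟩ := hb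
        rcases hchain.total hp hq with hpq | hqp
        · exact mem2 hq ((hcS hq).2.1.2.2 a b (hpq.2 ha) hb)
        · exact mem2 hp ((hcS hp).2.1.2.2 a b ha (hqp.2 hb))
      · intro g hg; exact mem1 hyc ((hcS hyc).2.2.1 hg)
      · intro h hh; exact mem2 hyc ((hcS hyc).2.2.2.1 hh)
      · rintro x ⟨g, hg, h, hh, hfgh⟩
        obtain ⟨_, ⟨p, rfl⟩, _, ⟨hp, rfl⟩, hg⟩ := hg
        obtain ⟨_, ⟨q, rfl⟩, _, ⟨hq, rfl⟩, hh⟩ := hh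
        rcases hchain.total hp hq with hpq | hqp
        · exact (hcS hq).2.2.2.2 ⟨g, hpq.1 hg, h, hh, hfgh⟩
        · exact (hcS hp).2.2.2.2 ⟨g, hg, h, hqp.2 hh, hfgh⟩
    · intro p hp
      exact ⟨fun a ha => Set.mem_biUnion hp ha, fun b hb => Set.mem_biUnion hp hb⟩)
    (G, H) hGH
  obtain ⟨hQ, hR, hGQ, hHR, hfQR⟩ := hmS
  set Q := m.1
  set R := m.2
  -- P is a proper prime filter
  obtain ⟨hPf, hPne, hPpr⟩ := hP
  -- Q and R are proper
  have hQne : Q ≠ Set.univ := by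
    intro h
    apply hPne
    apply Set.eq_univ_of_univ_subset
    intro z _
    exact hfQR ⟨⊥, h ▸ Set.mem_univ ⊥, ⊤, hR.1, by rw [hf3]; exact bot_le⟩
  have hRne : R ≠ Set.univ := by
    intro h
    apply hPne
    apply Set.eq_univ_of_univ_subset
    intro z _
    exact hfQR ⟨⊤, hQ.1, ⊥, h ▸ Set.mem_univ ⊥, by rw [hf4]; exact bot_le⟩
  -- primeness of Q
  have hQpr : ∀ x y : A, x ⊔ y ∈ Q → x ∈ Q ∨ y ∈ Q := by
    intro x y hxy
    by_contra hc
    push_neg at hc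
    obtain ⟨hx, hy⟩ := hc
    -- the filter generated by Q and an element t
    have hext : ∀ t : A, t ∉ Q →
        ∃ z ∉ P, ∃ q ∈ Q, ∃ r ∈ R, f (q ⊓ t) r ≤ z := by
      intro t ht
      set Qt : Set A := {a | ∃ q ∈ Q, q ⊓ t ≤ a} with hQt
      have hQtf : IsLatFilter Qt := by
        refine ⟨⟨⊤, hQ.1, le_top⟩, ?_, ?_⟩
        · rintro a b ⟨q, hq, hle'⟩ hab; exact ⟨q, hq, hle'.trans hab⟩
        · rintro a b ⟨q1, hq1, h1⟩ ⟨q2, hq2, h2⟩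
          refine ⟨q1 ⊓ q2, hQ.2.2 _ _ hq1 hq2, ?_⟩
          have : (q1 ⊓ q2) ⊓ t ≤ (q1 ⊓ t) ⊓ (q2 ⊓ t) := by
            simp only [le_inf_iff]
            exact ⟨⟨inf_le_left.trans inf_le_left, inf_le_right⟩,
              ⟨inf_le_left.trans inf_le_right, inf_le_right⟩⟩
          exact this.trans (inf_le_inf h1 h2)
      have hQQt : Q ⊆ Qt := fun a ha => ⟨a, ha, inf_le_left⟩
      have htQt : t ∈ Qt := ⟨⊤, hQ.1, by simp⟩
      have hnotS : (Qt, R) ∉ S := by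
        intro hmem
        have : (Qt, R) ≤ m := hmax hmem ⟨hQQt, subset_rfl⟩
        exact ht (this.1 htQt)
      have hnsub : ¬ fSet f Qt R ⊆ P := by
        intro hs
        exact hnotS ⟨hQtf, hR, hGQ.trans hQQt, hHR, hs⟩
      rw [Set.not_subset] at hnsub
      obtain ⟨z, ⟨g, ⟨q, hq, hqt⟩, r, hr, hfr⟩, hzP⟩ := hnsub
      exact ⟨z, hzP, q, hq, r, hr, (fmono1 _ _ _ hqt).trans hfr⟩
    obtain ⟨z, hzP, q1, hq1, r1, hr1, h1⟩ := hext x hx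
    obtain ⟨w, hwP, q2, hq2, r2, hr2, h2⟩ := hext y hy
    set q : A := q1 ⊓ q2
    set r : B := r1 ⊓ r2
    have hqQ : q ∈ Q := hQ.2.2 _ _ hq1 hq2
    have hrR : r ∈ R := hR.2.2 _ _ hr1 hr2
    have hkey : f (q ⊓ (x ⊔ y)) r ≤ z ⊔ w := by
      rw [inf_sup_left, hf1]
      apply sup_le_sup
      · exact le_trans (le_trans (fmono1 _ _ _ (inf_le_inf_right x inf_le_left))
          (fmono2 _ _ _ inf_le_left)) h1
      · exact le_trans (le_trans (fmono1 _ _ _ (inf_le_inf_right y inf_le_right))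
          (fmono2 _ _ _ inf_le_right)) h2
    have : z ⊔ w ∈ P := hfQR ⟨q ⊓ (x ⊔ y), hQ.2.2 _ _ hqQ hxy, r, hrR, hkey⟩
    rcases hPpr _ _ this with h | h
    · exact hzP h
    · exact hwP h
  -- primeness of R
  have hRpr : ∀ b c : B, b ⊔ c ∈ R → b ∈ R ∨ c ∈ R := by
    intro b c hbc
    by_contra hc
    push_neg at hc
    obtain ⟨hb, hcn⟩ := hc
    have hext : ∀ t : B, t ∉ R →
        ∃ z ∉ P, ∃ q ∈ Q, ∃ r ∈ R, f q (r ⊓ t) ≤ z := by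
      intro t ht
      set Rt : Set B := {a | ∃ r ∈ R, r ⊓ t ≤ a} with hRt
      have hRtf : IsLatFilter Rt := by
        refine ⟨⟨⊤, hR.1, le_top⟩, ?_, ?_⟩
        · rintro a b' ⟨r, hr, hle'⟩ hab; exact ⟨r, hr, hle'.trans hab⟩
        · rintro a b' ⟨r1, hr1, h1⟩ ⟨r2, hr2, h2⟩
          refine ⟨r1 ⊓ r2, hR.2.2 _ _ hr1 hr2, ?_⟩
          have : (r1 ⊓ r2) ⊓ t ≤ (r1 ⊓ t) ⊓ (r2 ⊓ t) := by
            simp only [le_inf_iff]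
            exact ⟨⟨inf_le_left.trans inf_le_left, inf_le_right⟩,
              ⟨inf_le_left.trans inf_le_right, inf_le_right⟩⟩
          exact this.trans (inf_le_inf h1 h2)
      have hRRt : R ⊆ Rt := fun a ha => ⟨a, ha, inf_le_left⟩
      have htRt : t ∈ Rt := ⟨⊤, hR.1, by simp⟩
      have hnotS : (Q, Rt) ∉ S := by
        intro hmem
        have : (Q, Rt) ≤ m := hmax hmem ⟨subset_rfl, hRRt⟩
        exact ht (this.2 htRt)
      have hnsub : ¬ fSet f Q Rt ⊆ P := by
        intro hs
        exact hnotS ⟨hQ, hRtf, hGQ, hHR.trans hRRt, hs⟩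
      rw [Set.not_subset] at hnsub
      obtain ⟨z, ⟨g, hg, h', ⟨r, hr, hrt⟩, hfr⟩, hzP⟩ := hnsub
      exact ⟨z, hzP, g, hg, r, hr, (fmono2 _ _ _ hrt).trans hfr⟩
    obtain ⟨z, hzP, q1, hq1, r1, hr1, h1⟩ := hext b hb
    obtain ⟨w, hwP, q2, hq2, r2, hr2, h2⟩ := hext c hcn
    set q : A := q1 ⊓ q2
    set r : B := r1 ⊓ r2
    have hqQ : q ∈ Q := hQ.2.2 _ _ hq1 hq2
    have hrR : r ∈ R := hR.2.2 _ _ hr1 hr2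
    have hkey : f q (r ⊓ (b ⊔ c)) ≤ z ⊔ w := by
      rw [inf_sup_left, hf2]
      apply sup_le_sup
      · exact le_trans (le_trans (fmono2 _ _ _ (inf_le_inf_right b inf_le_left))
          (fmono1 _ _ _ inf_le_left)) h1
      · exact le_trans (le_trans (fmono2 _ _ _ (inf_le_inf_right c inf_le_right))
          (fmono1 _ _ _ inf_le_right)) h2
    have : z ⊔ w ∈ P := hfQR ⟨q, hqQ, r ⊓ (b ⊔ c), hR.2.2 _ _ hrR hbc, hkey⟩
    rcases hPpr _ _ this with h | h
    · exact hzP h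
    · exact hwP h
  exact ⟨Q, R, ⟨hQ, hQne, hQpr⟩, ⟨hR, hRne, hRpr⟩, hGQ, hHR, hfQR⟩
end

section
/- Let ⟨A, B, f, i⟩ be a FIDL-module, x ∈ A, b ∈ B, and P a prime filter of A. Then f(x,b) ∈ P if and only if there exist a prime filter Q of A and a prime filter R of B such that x ∈ Q, b ∈ R, and f(Q,R) ⊆ P (i.e., f(q,r) ∈ P for all q ∈ Q, r ∈ R). -/
lemma sep_lemma {α : Type*} [DistribLattice α] [BoundedOrder α] {a : α} {I : Set α}
    (hlow : ∀ x y : α, x ∈ I → y ≤ x → y ∈ I)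
    (hsup : ∀ x y : α, x ∈ I → y ∈ I → x ⊔ y ∈ I)
    (hbot : (⊥ : α) ∈ I) (ha : a ∉ I) :
    ∃ Q : Set α, IsPrimeLatFilter Q ∧ a ∈ Q ∧ ∀ q ∈ Q, q ∉ I := by
  set Iid : Order.Ideal α :=
    ⟨⟨I, fun x y hyx hx => hlow x y hx hyx⟩, ⟨⊥, hbot⟩,
      fun x hx y hy => ⟨x ⊔ y, hsup x y hx hy, le_sup_left, le_sup_right⟩⟩ with hIid
  have hdisj : Disjoint ((Order.PFilter.principal a : Order.PFilter α) : Set α) (Iid : Set α) := by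
    rw [Set.disjoint_left]
    rintro z hz hzI
    exact ha (hlow z a hzI hz)
  obtain ⟨J, hJp, hIJ, hJd⟩ := DistribLattice.prime_ideal_of_disjoint_filter_ideal hdisj
  refine ⟨(J : Set α)ᶜ, ⟨⟨?_, ?_, ?_⟩, ?_, ?_⟩, ?_, ?_⟩
  · intro hT
    have : ∀ z : α, z ∈ J := fun z => J.lower le_top hT
    exact hJp.toIsProper.ne_univ (Set.eq_univ_iff_forall.mpr this)
  · intro u v hu huv hv
    exact hu (J.lower huv hv)
  · intro u v hu hv huv
    rcases hJp.mem_or_mem huv with h | h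
    · exact hu h
    · exact hv h
  · intro h
    have : (⊥ : α) ∈ (J : Set α)ᶜ := h ▸ Set.mem_univ _
    exact this J.bot_mem
  · intro u v huv
    by_contra hc
    push_neg at hc
    have hu : u ∈ J := not_not.mp hc.1
    have hv : v ∈ J := not_not.mp hc.2
    exact huv (J.sup_mem hu hv)
  · exact Set.disjoint_left.mp hJd (Order.PFilter.mem_principal.mpr le_rfl)
  · intro q hq hqI
    exact hq (hIJ hqI)

theorem stmt_5 {A B : Type*} [DistribLattice A] [BoundedOrder A]
    [DistribLattice B] [BoundedOrder B] (f : A → B → A) (i : B → A → A)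
    (hM : IsFIDL f i) (x : A) (b : B) (P : Set A) (hP : IsPrimeLatFilter P) :
    f x b ∈ P ↔
      ∃ Q : Set A, ∃ R : Set B, IsPrimeLatFilter Q ∧ IsPrimeLatFilter R ∧
        x ∈ Q ∧ b ∈ R ∧ (∀ q ∈ Q, ∀ r ∈ R, f q r ∈ P) := by
  obtain ⟨hf1, hf2, hf3, hf4, _, _, _⟩ := hM
  obtain ⟨⟨hPtop, hPup, hPinf⟩, hPne, hPpr⟩ := hP
  have hbotP : (⊥ : A) ∉ P := by
    intro h
    exact hPne (Set.eq_univ_iff_forall.mpr fun z => hPup ⊥ z h bot_le)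
  have hmono1 : ∀ (u v : A) (c : B), u ≤ v → f u c ≤ f v c := by
    intro u v c huv
    have : f (u ⊔ v) c = f u c ⊔ f v c := hf1 u v c
    rw [sup_eq_right.mpr huv] at this
    rw [this]; exact le_sup_left
  have hmono2 : ∀ (u : A) (c d : B), c ≤ d → f u c ≤ f u d := by
    intro u c d hcd
    have : f u (c ⊔ d) = f u c ⊔ f u d := hf2 u c d
    rw [sup_eq_right.mpr hcd] at this
    rw [this]; exact le_sup_left
  constructor
  · intro hfxb
    -- Step 1: find prime filter R in B
    set I : Set B := {c : B | f x c ∉ P} with hI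
    obtain ⟨R, hRpf, hbR, hRI⟩ :
        ∃ R : Set B, IsPrimeLatFilter R ∧ b ∈ R ∧ ∀ r ∈ R, r ∉ I := by
      apply sep_lemma
      · intro c d hc hdc hdP
        exact hc (hPup (f x d) (f x c) hdP (hmono2 x d c hdc))
      · intro c d hc hd hcd
        rcases hPpr (f x c) (f x d) ((hf2 x c d) ▸ hcd) with h | h
        · exact hc h
        · exact hd h
      · simpa [hI, hf4 x] using hbotP
      · simp only [hI, Set.mem_setOf_eq, not_not]
        exact hfxb
    have hfxr : ∀ r ∈ R, f x r ∈ P := by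
      intro r hr
      have := hRI r hr
      simpa [hI] using this
    -- Step 2: find prime filter Q in A
    set J : Set A := {y : A | ∃ r ∈ R, f y r ∉ P} with hJ
    obtain ⟨Q, hQpf, hxQ, hQJ⟩ :
        ∃ Q : Set A, IsPrimeLatFilter Q ∧ x ∈ Q ∧ ∀ q ∈ Q, q ∉ J := by
      apply sep_lemma
      · rintro u v ⟨r, hr, hur⟩ hvu
        exact ⟨r, hr, fun h => hur (hPup (f v r) (f u r) h (hmono1 v u r hvu))⟩
      · rintro u v ⟨r, hr, hur⟩ ⟨s, hs, hvs⟩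
        refine ⟨r ⊓ s, hRpf.1.2.2 r s hr hs, ?_⟩
        intro h
        rw [hf1 u v (r ⊓ s)] at h
        rcases hPpr _ _ h with h' | h'
        · exact hur (hPup _ _ h' (hmono2 u (r ⊓ s) r inf_le_left))
        · exact hvs (hPup _ _ h' (hmono2 v (r ⊓ s) s inf_le_right))
      · exact ⟨b, hbR, by simpa [hf3 b] using hbotP⟩
      · rintro ⟨r, hr, hxr⟩
        exact hxr (hfxr r hr)
    refine ⟨Q, R, hQpf, hRpf, hxQ, hbR, ?_⟩
    intro q hq r hr
    by_contra hc
    exact hQJ q hq ⟨r, hr, hc⟩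
  · rintro ⟨Q, R, hQpf, hRpf, hxQ, hbR, h⟩
    exact h x hxQ b hbR
end

section
/- Let X, Y be posets, R ⊆ X × Y × X with the property that (x,y,z) ∈ R, x' ≤ x, y' ≤ y, z ≤ z' imply (x',y',z') ∈ R, and T ⊆ Y × X × X with the property that (y,x,z) ∈ T, y' ≤ y, x' ≤ x, z ≤ z' imply (y',x',z') ∈ T. Then the structure ⟨P_i(X), P_i(Y), f, i⟩, where P_i denotes the lattice of upward-closed sets, f(U,V) = {z : ∃ x ∈ U, y ∈ V with (x,y,z) ∈ R}, and i(V,U) = {x : ∀ y ∈ V, ∀ z, (y,x,z) ∈ T implies z ∈ U}, is a FIDL-module. -/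
def frameF {X Y : Type*} (R : X → Y → X → Prop) (U : Set X) (V : Set Y) : Set X :=
  {z : X | ∃ x ∈ U, ∃ y ∈ V, R x y z}

def frameI {X Y : Type*} (T : Y → X → X → Prop) (V : Set Y) (U : Set X) : Set X :=
  {x : X | ∀ y : Y, ∀ z : X, T y x z → y ∈ V → z ∈ U}

theorem stmt_9 {X Y : Type*} [PartialOrder X] [PartialOrder Y]
    (R : X → Y → X → Prop) (T : Y → X → X → Prop)
    (hR : ∀ x y z x' y' z', R x y z → x' ≤ x → y' ≤ y → z ≤ z' → R x' y' z')
    (hT : ∀ y x z y' x' z', T y x z → y' ≤ y → x' ≤ x → z ≤ z' → T y' x' z') :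
    (∀ (U : Set X) (V : Set Y), IsUpperSet U → IsUpperSet V →
        IsUpperSet (frameF R U V) ∧ IsUpperSet (frameI T V U)) ∧
    (∀ (U₁ U₂ : Set X) (V : Set Y), IsUpperSet U₁ → IsUpperSet U₂ → IsUpperSet V →
        frameF R (U₁ ∪ U₂) V = frameF R U₁ V ∪ frameF R U₂ V) ∧
    (∀ (U : Set X) (V₁ V₂ : Set Y), IsUpperSet U → IsUpperSet V₁ → IsUpperSet V₂ →
        frameF R U (V₁ ∪ V₂) = frameF R U V₁ ∪ frameF R U V₂) ∧
    (∀ V : Set Y, IsUpperSet V → frameF R (∅ : Set X) V = ∅) ∧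
    (∀ U : Set X, IsUpperSet U → frameF R U (∅ : Set Y) = ∅) ∧
    (∀ (V : Set Y) (U₁ U₂ : Set X), IsUpperSet V → IsUpperSet U₁ → IsUpperSet U₂ →
        frameI T V (U₁ ∩ U₂) = frameI T V U₁ ∩ frameI T V U₂) ∧
    (∀ (V₁ V₂ : Set Y) (U : Set X), IsUpperSet V₁ → IsUpperSet V₂ → IsUpperSet U →
        frameI T (V₁ ∪ V₂) U = frameI T V₁ U ∩ frameI T V₂ U) ∧
    (∀ V : Set Y, IsUpperSet V → frameI T V (Set.univ : Set X) = Set.univ) := by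
  refine ⟨?_, ?_, ?_, ?_, ?_, ?_, ?_, ?_⟩
  · intro U V hU hV
    constructor
    · intro z z' hzz' ⟨x, hx, y, hy, hr⟩
      exact ⟨x, hx, y, hy, hR x y z x y z' hr le_rfl le_rfl hzz'⟩
    · intro x x' hxx' h y z ht hy
      exact h y z (hT y x' z y x z ht le_rfl hxx' le_rfl) hy
  · intro U₁ U₂ V _ _ _
    ext z
    constructor
    · rintro ⟨x, hx | hx, y, hy, hr⟩
      · exact Or.inl ⟨x, hx, y, hy, hr⟩
      · exact Or.inr ⟨x, hx, y, hy, hr⟩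
    · rintro (⟨x, hx, y, hy, hr⟩ | ⟨x, hx, y, hy, hr⟩)
      · exact ⟨x, Or.inl hx, y, hy, hr⟩
      · exact ⟨x, Or.inr hx, y, hy, hr⟩
  · intro U V₁ V₂ _ _ _
    ext z
    constructor
    · rintro ⟨x, hx, y, hy | hy, hr⟩
      · exact Or.inl ⟨x, hx, y, hy, hr⟩
      · exact Or.inr ⟨x, hx, y, hy, hr⟩
    · rintro (⟨x, hx, y, hy, hr⟩ | ⟨x, hx, y, hy, hr⟩)
      · exact ⟨x, hx, y, Or.inl hy, hr⟩
      · exact ⟨x, hx, y, Or.inr hy, hr⟩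
  · intro V _
    ext z
    simp [frameF]
  · intro U _
    ext z
    simp [frameF]
  · intro V U₁ U₂ _ _ _
    ext x
    constructor
    · intro h
      exact ⟨fun y z ht hy => (h y z ht hy).1, fun y z ht hy => (h y z ht hy).2⟩
    · rintro ⟨h₁, h₂⟩ y z ht hy
      exact ⟨h₁ y z ht hy, h₂ y z ht hy⟩
  · intro V₁ V₂ U _ _ _
    ext x
    constructor
    · intro h
      exact ⟨fun y z ht hy => h y z ht (Or.inl hy), fun y z ht hy => h y z ht (Or.inr hy)⟩
    · rintro ⟨h₁, h₂⟩ y z ht (hy | hy)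
      · exact h₁ y z ht hy
      · exact h₂ y z ht hy
  · intro V _
    ext x
    simp [frameI]
end

section
/- Let ⟨A, B, f, i⟩ and ⟨A', B', f', i'⟩ be FIDL-modules and (α, γ) a FIDL-homomorphism between them. For prime filters Q' of A' and R' of B' and P' of A', if f'(Q', R') ⊆ P', then f(α⁻¹(Q'), γ⁻¹(R')) ⊆ α⁻¹(P'); and if i'(R', P') ⊆ Q', then i(γ⁻¹(R'), α⁻¹(P')) ⊆ α⁻¹(Q'). Here for prime filters Q, R, f(Q,R) = {x : ∃ q ∈ Q, r ∈ R, f(q,r) ≤ x} and i(R,P) = {x : ∃ r ∈ R, p ∈ P, p ≤ i(r,x)}. -/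
theorem stmt_16 {A B A' B' : Type*} [DistribLattice A] [BoundedOrder A]
    [DistribLattice B] [BoundedOrder B] [DistribLattice A'] [BoundedOrder A']
    [DistribLattice B'] [BoundedOrder B']
    (f : A → B → A) (i : B → A → A) (f' : A' → B' → A') (i' : B' → A' → A')
    (hM : IsFIDL f i) (hM' : IsFIDL f' i')
    (α : A → A') (γ : B → B')
    (hα : ∀ x y : A, α (x ⊔ y) = α x ⊔ α y ∧ α (x ⊓ y) = α x ⊓ α y)
    (hα0 : α ⊥ = ⊥) (hα1 : α ⊤ = ⊤)
    (hγ : ∀ b c : B, γ (b ⊔ c) = γ b ⊔ γ c ∧ γ (b ⊓ c) = γ b ⊓ γ c)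
    (hγ0 : γ ⊥ = ⊥) (hγ1 : γ ⊤ = ⊤)
    (hf : ∀ (x : A) (b : B), α (f x b) = f' (α x) (γ b))
    (hi : ∀ (b : B) (x : A), α (i b x) = i' (γ b) (α x))
    (Q' P' : Set A') (R' : Set B')
    (hQ' : IsPrimeLatFilter Q') (hR' : IsPrimeLatFilter R') (hP' : IsPrimeLatFilter P') :
    (fSet f' Q' R' ⊆ P' → fSet f (α ⁻¹' Q') (γ ⁻¹' R') ⊆ α ⁻¹' P') ∧
    (iSet i' R' P' ⊆ Q' → iSet i (γ ⁻¹' R') (α ⁻¹' P') ⊆ α ⁻¹' Q') := by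
  have hmono : ∀ x y : A, x ≤ y → α x ≤ α y := by
    intro x y hxy
    have : α (x ⊔ y) = α x ⊔ α y := (hα x y).1
    rw [sup_eq_right.mpr hxy] at this
    exact le_sup_left.trans this.ge
  constructor
  · intro hsub x hx
    obtain ⟨g, hg, h, hh, hle⟩ := hx
    apply hsub
    exact ⟨α g, hg, γ h, hh, by rw [← hf]; exact hmono _ _ hle⟩
  · intro hsub x hx
    obtain ⟨h, hh, g, hg, hle⟩ := hx
    apply hsub
    exact ⟨γ h, hh, α g, hg, by rw [← hi]; exact hmono _ _ hle⟩
end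

section
/- Let ⟨A, B, f, i⟩ be a FIDL-module, A' a bounded sublattice of A, and B' a bounded sublattice of B. If for all prime filters P, Q, Q₁ of A and R₁ of B with f(Q₁,R₁) ⊆ P and P ∩ A' ⊆ Q, there exist prime filters Q₂ of A and R₂ of B such that Q₁ ∩ A' ⊆ Q₂, R₁ ∩ B' ⊆ R₂ and f(Q₂,R₂) ⊆ Q, then f(a,b) ∈ A' for every a ∈ A' and b ∈ B' (i.e., ⟨A', B', f⟩ is a FDL-subalgebra). -/
def IsBddSublattice {α : Type*} [Lattice α] [BoundedOrder α] (S : Set α) : Prop :=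
  ⊥ ∈ S ∧ ⊤ ∈ S ∧ (∀ x ∈ S, ∀ y ∈ S, x ⊔ y ∈ S) ∧ (∀ x ∈ S, ∀ y ∈ S, x ⊓ y ∈ S)

-- separation lemma
lemma sep_lemma_s17 {α : Type*} [DistribLattice α] [BoundedOrder α] (F I : Set α)
    (hF : IsLatFilter F)
    (hI : ∀ x ∈ I, ∀ y ∈ I, x ⊔ y ∈ I) (hne : I.Nonempty)
    (hdisj : ∀ x ∈ F, ∀ s ∈ I, ¬ x ≤ s) :
    ∃ P : Set α, IsPrimeLatFilter P ∧ F ⊆ P ∧ ∀ x ∈ P, ∀ s ∈ I, ¬ x ≤ s := by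
  set S : Set (Set α) := {G | IsLatFilter G ∧ F ⊆ G ∧ ∀ x ∈ G, ∀ s ∈ I, ¬ x ≤ s} with hS
  have chain : ∀ c ⊆ S, IsChain (· ⊆ ·) c → c.Nonempty →
      ∃ ub ∈ S, ∀ s ∈ c, s ⊆ ub := by
    rintro c hcS hchain ⟨G₀, hG₀⟩
    refine ⟨⋃₀ c, ⟨⟨Set.mem_sUnion.2 ⟨G₀, hG₀, (hcS hG₀).1.1⟩, ?_, ?_⟩, ?_, ?_⟩,
      fun s hs => Set.subset_sUnion_of_mem hs⟩
    · rintro x y ⟨G, hG, hxG⟩ hxy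
      exact ⟨G, hG, (hcS hG).1.2.1 x y hxG hxy⟩
    · rintro x y ⟨G, hG, hxG⟩ ⟨G', hG', hyG'⟩
      rcases hchain.total hG hG' with h | h
      · exact ⟨G', hG', (hcS hG').1.2.2 x y (h hxG) hyG'⟩
      · exact ⟨G, hG, (hcS hG).1.2.2 x y hxG (h hyG')⟩
    · exact fun x hx => ⟨G₀, hG₀, (hcS hG₀).2.1 hx⟩
    · rintro x ⟨G, hG, hxG⟩ s hs
      exact (hcS hG).2.2 x hxG s hs
  obtain ⟨m, hFm, hm⟩ := zorn_subset_nonempty S chain F ⟨hF, le_refl F, hdisj⟩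
  obtain ⟨⟨hmF, hmS, hmdisj⟩, hmax⟩ := hm
  refine ⟨m, ⟨hmF, ?_, ?_⟩, hmS, hmdisj⟩
  · intro h
    obtain ⟨s, hs⟩ := hne
    exact hmdisj ⊥ (h ▸ Set.mem_univ _) s hs bot_le
  · intro x y hxy
    by_contra hxor
    push_neg at hxor
    obtain ⟨hx, hy⟩ := hxor
    -- the filter generated by m and x
    have key : ∀ z : α, z ∉ m → ∃ g ∈ m, ∃ s ∈ I, g ⊓ z ≤ s := by
      intro z hz
      by_contra hc
      push_neg at hc
      have hGz : ({w | ∃ g ∈ m, g ⊓ z ≤ w} : Set α) ∈ S := by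
        refine ⟨⟨⟨⊤, hmF.1, le_top⟩, ?_, ?_⟩, fun w hw => ⟨w, hmS hw, inf_le_left⟩, ?_⟩
        · rintro u v ⟨g, hg, hgu⟩ huv
          exact ⟨g, hg, hgu.trans huv⟩
        · rintro u v ⟨g, hg, hgu⟩ ⟨g', hg', hgv⟩
          exact ⟨g ⊓ g', hmF.2.2 g g' hg hg',
            le_inf (le_trans (inf_le_inf_right z inf_le_left) hgu)
              (le_trans (inf_le_inf_right z inf_le_right) hgv)⟩
        · rintro w ⟨g, hg, hgw⟩ s hs hws
          exact hc g hg s hs (hgw.trans hws)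
      have hsub : m ⊆ {w | ∃ g ∈ m, g ⊓ z ≤ w} := fun w hw => ⟨w, hw, inf_le_left⟩
      have := hmax hGz hsub
      exact hz (this ⟨⊤, hmF.1, inf_le_right⟩)
    obtain ⟨g₁, hg₁, s₁, hs₁, h₁⟩ := key x hx
    obtain ⟨g₂, hg₂, s₂, hs₂, h₂⟩ := key y hy
    have hg : g₁ ⊓ g₂ ∈ m := hmF.2.2 _ _ hg₁ hg₂
    have hmem : (g₁ ⊓ g₂) ⊓ (x ⊔ y) ∈ m := hmF.2.2 _ _ hg hxy
    refine hmdisj _ hmem (s₁ ⊔ s₂) (hI _ hs₁ _ hs₂) ?_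
    rw [inf_sup_left]
    exact sup_le_sup (le_trans (inf_le_inf_right x inf_le_left) h₁)
      (le_trans (inf_le_inf_right y inf_le_right) h₂)

lemma mem_of_primes {α : Type*} [DistribLattice α] [BoundedOrder α]
    (A' : Set α) (hA' : IsBddSublattice A') (c : α)
    (h : ∀ P Q : Set α, IsPrimeLatFilter P → IsPrimeLatFilter Q →
      P ∩ A' ⊆ Q → c ∈ P → c ∈ Q) : c ∈ A' := by
  by_contra hc
  -- filter generated by the elements of A' above c
  set Fu : Set α := {y | ∃ x ∈ A', c ≤ x ∧ x ≤ y} with hFu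
  have hFuF : IsLatFilter Fu := by
    refine ⟨⟨⊤, hA'.2.1, le_top, le_rfl⟩, ?_, ?_⟩
    · rintro u v ⟨x, hx, hcx, hxu⟩ huv
      exact ⟨x, hx, hcx, hxu.trans huv⟩
    · rintro u v ⟨x, hx, hcx, hxu⟩ ⟨x', hx', hcx', hx'v⟩
      exact ⟨x ⊓ x', hA'.2.2.2 x hx x' hx', le_inf hcx hcx', inf_le_inf hxu hx'v⟩
  obtain ⟨Q, hQ, hFuQ, hQc⟩ := sep_lemma_s17 Fu {c} hFuF
    (by rintro x rfl y rfl; simp) ⟨c, rfl⟩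
    (by rintro y ⟨x, hx, hcx, hxy⟩ s rfl hys
        exact hc (le_antisymm (hxy.trans hys) hcx ▸ hx))
  have hcQ : c ∉ Q := fun h' => hQc c h' c rfl le_rfl
  -- prime filter containing c whose trace on A' is inside Q
  obtain ⟨P, hP, hcP, hPdisj⟩ := sep_lemma_s17 {y | c ≤ y} {s | s ∈ A' ∧ s ∉ Q}
    ⟨le_top, fun x y hx hxy => hx.trans hxy, fun x y hx hy => le_inf hx hy⟩
    (by rintro x ⟨hxA, hxQ⟩ y ⟨hyA, hyQ⟩
        refine ⟨hA'.2.2.1 x hxA y hyA, fun hxy => ?_⟩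
        rcases hQ.2.2 x y hxy with h' | h' <;> [exact hxQ h'; exact hyQ h'])
    ⟨⊥, hA'.1, fun h' => hQc ⊥ h' c rfl bot_le⟩
    (by rintro x (hx : c ≤ x) s ⟨hsA, hsQ⟩ hxs
        exact hsQ (hFuQ ⟨s, hsA, hx.trans hxs, le_rfl⟩))
  have hPQ : P ∩ A' ⊆ Q := by
    rintro x ⟨hxP, hxA⟩
    by_contra hxQ
    exact hPdisj x hxP x ⟨hxA, hxQ⟩ le_rfl
  exact hcQ (h P Q hP hQ hPQ (hcP le_rfl))

lemma pair_lemma {A B : Type*} [DistribLattice A] [BoundedOrder A]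
    [DistribLattice B] [BoundedOrder B] (f : A → B → A)
    (hf1 : ∀ x y : A, ∀ b : B, f (x ⊔ y) b = f x b ⊔ f y b)
    (hf2 : ∀ x : A, ∀ b c : B, f x (b ⊔ c) = f x b ⊔ f x c)
    (hf3 : ∀ b : B, f ⊥ b = ⊥) (hf4 : ∀ x : A, f x ⊥ = ⊥)
    (P : Set A) (hP : IsPrimeLatFilter P) (a : A) (b : B) (hab : f a b ∈ P) :
    ∃ Q₁ : Set A, ∃ R₁ : Set B, IsPrimeLatFilter Q₁ ∧ IsPrimeLatFilter R₁ ∧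
      a ∈ Q₁ ∧ b ∈ R₁ ∧ fSet f Q₁ R₁ ⊆ P := by
  have mono1 : ∀ (x y : A) (c : B), x ≤ y → f x c ≤ f y c := by
    intro x y c hxy
    have : f y c = f x c ⊔ f y c := by rw [← hf1, sup_eq_right.2 hxy]
    rw [this]; exact le_sup_left
  have mono2 : ∀ (x : A) (c d : B), c ≤ d → f x c ≤ f x d := by
    intro x c d hcd
    have : f x d = f x c ⊔ f x d := by rw [← hf2, sup_eq_right.2 hcd]
    rw [this]; exact le_sup_left
  set S : Set (Set A × Set B) := {p | IsLatFilter p.1 ∧ IsLatFilter p.2 ∧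
    a ∈ p.1 ∧ b ∈ p.2 ∧ fSet f p.1 p.2 ⊆ P} with hS
  have hx₀ : (({x | a ≤ x}, {y | b ≤ y}) : Set A × Set B) ∈ S := by
    refine ⟨⟨le_top, fun x y hx hxy => hx.trans hxy, fun x y hx hy => le_inf hx hy⟩,
      ⟨le_top, fun x y hx hxy => hx.trans hxy, fun x y hx hy => le_inf hx hy⟩,
      le_rfl, le_rfl, ?_⟩
    rintro z ⟨g, (hg : a ≤ g), h, (hh : b ≤ h), hfz⟩
    exact hP.1.2.1 _ _ hab (((mono1 a g b hg).trans (mono2 g b h hh)).trans hfz)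
  have chain : ∀ c ⊆ S, IsChain (· ≤ ·) c → ∀ y ∈ c, ∃ ub ∈ S, ∀ z ∈ c, z ≤ ub := by
    rintro c hcS hchain p₀ hp₀
    refine ⟨(⋃₀ (Prod.fst '' c), ⋃₀ (Prod.snd '' c)), ⟨⟨?_, ?_, ?_⟩, ⟨?_, ?_, ?_⟩, ?_, ?_, ?_⟩,
      fun z hz => ⟨Set.subset_sUnion_of_mem ⟨z, hz, rfl⟩, Set.subset_sUnion_of_mem ⟨z, hz, rfl⟩⟩⟩
    · exact ⟨p₀.1, ⟨p₀, hp₀, rfl⟩, (hcS hp₀).1.1⟩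
    · rintro x y ⟨G, ⟨p, hp, rfl⟩, hxG⟩ hxy
      exact ⟨p.1, ⟨p, hp, rfl⟩, (hcS hp).1.2.1 x y hxG hxy⟩
    · rintro x y ⟨G, ⟨p, hp, rfl⟩, hxG⟩ ⟨G', ⟨q, hq, rfl⟩, hyG⟩
      rcases hchain.total hp hq with h | h
      · exact ⟨q.1, ⟨q, hq, rfl⟩, (hcS hq).1.2.2 x y (h.1 hxG) hyG⟩
      · exact ⟨p.1, ⟨p, hp, rfl⟩, (hcS hp).1.2.2 x y hxG (h.1 hyG)⟩
    · exact ⟨p₀.2, ⟨p₀, hp₀, rfl⟩, (hcS hp₀).2.1.1⟩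
    · rintro x y ⟨H, ⟨p, hp, rfl⟩, hxH⟩ hxy
      exact ⟨p.2, ⟨p, hp, rfl⟩, (hcS hp).2.1.2.1 x y hxH hxy⟩
    · rintro x y ⟨H, ⟨p, hp, rfl⟩, hxH⟩ ⟨H', ⟨q, hq, rfl⟩, hyH⟩
      rcases hchain.total hp hq with h | h
      · exact ⟨q.2, ⟨q, hq, rfl⟩, (hcS hq).2.1.2.2 x y (h.2 hxH) hyH⟩
      · exact ⟨p.2, ⟨p, hp, rfl⟩, (hcS hp).2.1.2.2 x y hxH (h.2 hyH)⟩
    · exact ⟨p₀.1, ⟨p₀, hp₀, rfl⟩, (hcS hp₀).2.2.1⟩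
    · exact ⟨p₀.2, ⟨p₀, hp₀, rfl⟩, (hcS hp₀).2.2.2.1⟩
    · rintro z ⟨g, ⟨G, ⟨p, hp, rfl⟩, hg⟩, h, ⟨H, ⟨q, hq, rfl⟩, hh⟩, hfz⟩
      rcases hchain.total hp hq with hle | hle
      · exact (hcS hq).2.2.2.2 ⟨g, hle.1 hg, h, hh, hfz⟩
      · exact (hcS hp).2.2.2.2 ⟨g, hg, h, hle.2 hh, hfz⟩
  obtain ⟨m, _, hmS, hmax⟩ := zorn_le_nonempty₀ S chain _ hx₀
  obtain ⟨hG, hH, haG, hbH, hfP⟩ := hmS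
  have hPne : ∀ z : A, z ∈ P → z ≠ ⊥ ∨ P ≠ Set.univ := fun z hz => Or.inr hP.2.1
  have hbotP : (⊥ : A) ∉ P := by
    intro hbot
    exact hP.2.1 (Set.eq_univ_of_forall fun y => hP.1.2.1 ⊥ y hbot bot_le)
  -- key extension property, first coordinate
  have key1 : ∀ z : A, z ∉ m.1 → ∃ g ∈ m.1, ∃ h ∈ m.2, f (g ⊓ z) h ∉ P := by
    intro z hz
    by_contra hcon
    push_neg at hcon
    have hGz : (({w | ∃ g ∈ m.1, g ⊓ z ≤ w}, m.2) : Set A × Set B) ∈ S := by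
      refine ⟨⟨⟨⊤, hG.1, le_top⟩, ?_, ?_⟩, hH, ⟨a, haG, inf_le_left⟩, hbH, ?_⟩
      · rintro u v ⟨g, hg, hgu⟩ huv
        exact ⟨g, hg, hgu.trans huv⟩
      · rintro u v ⟨g, hg, hgu⟩ ⟨g', hg', hgv⟩
        exact ⟨g ⊓ g', hG.2.2 g g' hg hg',
          le_inf (le_trans (inf_le_inf_right z inf_le_left) hgu)
            (le_trans (inf_le_inf_right z inf_le_right) hgv)⟩
      · rintro w ⟨g', ⟨g, hg, hgg'⟩, h, hh, hfw⟩
        exact hP.1.2.1 _ _ (hcon g hg h hh)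
          (((mono1 _ _ _ hgg').trans hfw))
    have hle : m ≤ (({w | ∃ g ∈ m.1, g ⊓ z ≤ w}, m.2) : Set A × Set B) :=
      ⟨fun w hw => ⟨w, hw, inf_le_left⟩, le_rfl⟩
    have := (hmax hGz hle).1
    exact hz (this ⟨⊤, hG.1, by simp⟩)
  have key2 : ∀ z : B, z ∉ m.2 → ∃ g ∈ m.1, ∃ h ∈ m.2, f g (h ⊓ z) ∉ P := by
    intro z hz
    by_contra hcon
    push_neg at hcon
    have hHz : ((m.1, {w | ∃ h ∈ m.2, h ⊓ z ≤ w}) : Set A × Set B) ∈ S := by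
      refine ⟨hG, ⟨⟨⊤, hH.1, le_top⟩, ?_, ?_⟩, haG, ⟨b, hbH, inf_le_left⟩, ?_⟩
      · rintro u v ⟨h, hh, hhu⟩ huv
        exact ⟨h, hh, hhu.trans huv⟩
      · rintro u v ⟨h, hh, hhu⟩ ⟨h', hh', hhv⟩
        exact ⟨h ⊓ h', hH.2.2 h h' hh hh',
          le_inf (le_trans (inf_le_inf_right z inf_le_left) hhu)
            (le_trans (inf_le_inf_right z inf_le_right) hhv)⟩
      · rintro w ⟨g, hg, h', ⟨h, hh, hhh'⟩, hfw⟩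
        exact hP.1.2.1 _ _ (hcon g hg h hh)
          (((mono2 _ _ _ hhh').trans hfw))
    have hle : m ≤ ((m.1, {w | ∃ h ∈ m.2, h ⊓ z ≤ w}) : Set A × Set B) :=
      ⟨le_rfl, fun w hw => ⟨w, hw, inf_le_left⟩⟩
    have := (hmax hHz hle).2
    exact hz (this ⟨⊤, hH.1, by simp⟩)
  refine ⟨m.1, m.2, ⟨hG, ?_, ?_⟩, ⟨hH, ?_, ?_⟩, haG, hbH, hfP⟩
  · -- m.1 proper
    intro h
    have : (⊥ : A) ∈ m.1 := h ▸ Set.mem_univ _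
    exact hbotP (hf3 b ▸ hfP ⟨⊥, this, b, hbH, le_rfl⟩)
  · -- m.1 prime
    intro x y hxy
    by_contra hcon
    push_neg at hcon
    obtain ⟨g₁, hg₁, h₁, hh₁, hn₁⟩ := key1 x hcon.1
    obtain ⟨g₂, hg₂, h₂, hh₂, hn₂⟩ := key1 y hcon.2
    set g := g₁ ⊓ g₂
    set h := h₁ ⊓ h₂
    have hg : g ∈ m.1 := hG.2.2 _ _ hg₁ hg₂
    have hh : h ∈ m.2 := hH.2.2 _ _ hh₁ hh₂
    have hx' : f (g ⊓ x) h ∉ P := fun hmem => hn₁ (hP.1.2.1 _ _ hmem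
      ((mono1 _ _ _ (inf_le_inf_right x inf_le_left)).trans (mono2 _ _ _ inf_le_left)))
    have hy' : f (g ⊓ y) h ∉ P := fun hmem => hn₂ (hP.1.2.1 _ _ hmem
      ((mono1 _ _ _ (inf_le_inf_right y inf_le_right)).trans (mono2 _ _ _ inf_le_right)))
    have hmem : f (g ⊓ (x ⊔ y)) h ∈ P :=
      hfP ⟨g ⊓ (x ⊔ y), hG.2.2 _ _ hg hxy, h, hh, le_rfl⟩
    rw [inf_sup_left, hf1] at hmem
    rcases hP.2.2 _ _ hmem with h' | h' <;> [exact hx' h'; exact hy' h']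
  · -- m.2 proper
    intro h
    have : (⊥ : B) ∈ m.2 := h ▸ Set.mem_univ _
    exact hbotP (hf4 a ▸ hfP ⟨a, haG, ⊥, this, le_rfl⟩)
  · -- m.2 prime
    intro x y hxy
    by_contra hcon
    push_neg at hcon
    obtain ⟨g₁, hg₁, h₁, hh₁, hn₁⟩ := key2 x hcon.1
    obtain ⟨g₂, hg₂, h₂, hh₂, hn₂⟩ := key2 y hcon.2
    set g := g₁ ⊓ g₂
    set h := h₁ ⊓ h₂
    have hg : g ∈ m.1 := hG.2.2 _ _ hg₁ hg₂
    have hh : h ∈ m.2 := hH.2.2 _ _ hh₁ hh₂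
    have hx' : f g (h ⊓ x) ∉ P := fun hmem => hn₁ (hP.1.2.1 _ _ hmem
      ((mono1 _ _ _ inf_le_left).trans (mono2 _ _ _ (inf_le_inf_right x inf_le_left))))
    have hy' : f g (h ⊓ y) ∉ P := fun hmem => hn₂ (hP.1.2.1 _ _ hmem
      ((mono1 _ _ _ inf_le_right).trans (mono2 _ _ _ (inf_le_inf_right y inf_le_right))))
    have hmem : f g (h ⊓ (x ⊔ y)) ∈ P :=
      hfP ⟨g, hg, h ⊓ (x ⊔ y), hH.2.2 _ _ hh hxy, le_rfl⟩
    rw [inf_sup_left, hf2] at hmem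
    rcases hP.2.2 _ _ hmem with h' | h' <;> [exact hx' h'; exact hy' h']

theorem stmt_17 {A B : Type*} [DistribLattice A] [BoundedOrder A]
    [DistribLattice B] [BoundedOrder B] (f : A → B → A) (i : B → A → A)
    (hM : IsFIDL f i) (A' : Set A) (B' : Set B)
    (hA' : IsBddSublattice A') (hB' : IsBddSublattice B')
    (hyp : ∀ P Q Q₁ : Set A, ∀ R₁ : Set B,
      IsPrimeLatFilter P → IsPrimeLatFilter Q → IsPrimeLatFilter Q₁ →
      IsPrimeLatFilter R₁ → fSet f Q₁ R₁ ⊆ P → P ∩ A' ⊆ Q →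
      ∃ Q₂ : Set A, ∃ R₂ : Set B, IsPrimeLatFilter Q₂ ∧ IsPrimeLatFilter R₂ ∧
        Q₁ ∩ A' ⊆ Q₂ ∧ R₁ ∩ B' ⊆ R₂ ∧ fSet f Q₂ R₂ ⊆ Q) :
    ∀ a ∈ A', ∀ b ∈ B', f a b ∈ A' := by
  intro a ha b hb
  obtain ⟨hf1, hf2, hf3, hf4, _⟩ := hM
  apply mem_of_primes A' hA'
  intro P Q hP hQ hPQ hfP
  obtain ⟨Q₁, R₁, hQ₁, hR₁, haQ₁, hbR₁, hsub⟩ := pair_lemma f hf1 hf2 hf3 hf4 P hP a b hfP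
  obtain ⟨Q₂, R₂, hQ₂, hR₂, hQ₁₂, hR₁₂, hfQ⟩ := hyp P Q Q₁ R₁ hP hQ hQ₁ hR₁ hsub hPQ
  exact hfQ ⟨a, hQ₁₂ ⟨haQ₁, ha⟩, b, hR₁₂ ⟨hbR₁, hb⟩, le_rfl⟩
end

section
/- Let ⟨A, B, f, i⟩ be a FIDL-module, A' a bounded sublattice of A, and B' a bounded sublattice of B such that f(a,b) ∈ A' for every a ∈ A', b ∈ B'. Then for all prime filters P, Q, Q₁ of A and R₁ of B, if f(Q₁,R₁) ⊆ P and P ∩ A' ⊆ Q, there exist prime filters Q₂ of A and R₂ of B such that Q₁ ∩ A' ⊆ Q₂, R₁ ∩ B' ⊆ R₂, and f(Q₂,R₂) ⊆ Q. -/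
theorem stmt_18 {A B : Type*} [DistribLattice A] [BoundedOrder A]
    [DistribLattice B] [BoundedOrder B] (f : A → B → A) (i : B → A → A)
    (hM : IsFIDL f i) (A' : Set A) (B' : Set B)
    (hA' : IsBddSublattice A') (hB' : IsBddSublattice B')
    (hcl : ∀ a ∈ A', ∀ b ∈ B', f a b ∈ A') :
    ∀ P Q Q₁ : Set A, ∀ R₁ : Set B,
      IsPrimeLatFilter P → IsPrimeLatFilter Q → IsPrimeLatFilter Q₁ →
      IsPrimeLatFilter R₁ → fSet f Q₁ R₁ ⊆ P → P ∩ A' ⊆ Q →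
      ∃ Q₂ : Set A, ∃ R₂ : Set B, IsPrimeLatFilter Q₂ ∧ IsPrimeLatFilter R₂ ∧
        Q₁ ∩ A' ⊆ Q₂ ∧ R₁ ∩ B' ⊆ R₂ ∧ fSet f Q₂ R₂ ⊆ Q := by
  obtain ⟨hf1, hf2, hf3, hf4, -, -, -⟩ := hM
  intro P Q Q₁ R₁ hP hQ hQ₁ hR₁ hPQ hPA
  have mono1 : ∀ (x y : A) (b : B), x ≤ y → f x b ≤ f y b := by
    intro x y b hxy
    have h := hf1 x y b
    rw [sup_eq_right.mpr hxy] at h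
    rw [h]; exact le_sup_left
  have mono2 : ∀ (x : A) (b c : B), b ≤ c → f x b ≤ f x c := by
    intro x b c hbc
    have h := hf2 x b c
    rw [sup_eq_right.mpr hbc] at h
    rw [h]; exact le_sup_left
  obtain ⟨⟨hQtop, hQup, hQmeet⟩, hQproper, hQprime⟩ := hQ
  have hQbot : (⊥ : A) ∉ Q := fun h =>
    hQproper (Set.eq_univ_of_forall fun x => hQup ⊥ x h bot_le)
  -- the collection of admissible pairs of filters
  set 𝒞 : Set (Set A × Set B) :=
    {p | IsLatFilter p.1 ∧ IsLatFilter p.2 ∧ Q₁ ∩ A' ⊆ p.1 ∧ R₁ ∩ B' ⊆ p.2 ∧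
      fSet f p.1 p.2 ⊆ Q} with h𝒞
  -- the initial pair
  set F₀ : Set A := {x | ∃ s ∈ Q₁ ∩ A', s ≤ x} with hF₀
  set G₀ : Set B := {x | ∃ s ∈ R₁ ∩ B', s ≤ x} with hG₀
  have h₀ : (F₀, G₀) ∈ 𝒞 := by
    refine ⟨⟨⟨⊤, ⟨hQ₁.1.1, hA'.2.1⟩, le_rfl⟩, ?_, ?_⟩,
      ⟨⟨⊤, ⟨hR₁.1.1, hB'.2.1⟩, le_rfl⟩, ?_, ?_⟩, ?_, ?_, ?_⟩
    · rintro x y ⟨s, hs, hsx⟩ hxy; exact ⟨s, hs, hsx.trans hxy⟩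
    · rintro x y ⟨s, hs, hsx⟩ ⟨t, ht, hty⟩
      exact ⟨s ⊓ t, ⟨hQ₁.1.2.2 s t hs.1 ht.1, hA'.2.2.2 s hs.2 t ht.2⟩,
        inf_le_inf hsx hty⟩
    · rintro x y ⟨s, hs, hsx⟩ hxy; exact ⟨s, hs, hsx.trans hxy⟩
    · rintro x y ⟨s, hs, hsx⟩ ⟨t, ht, hty⟩
      exact ⟨s ⊓ t, ⟨hR₁.1.2.2 s t hs.1 ht.1, hB'.2.2.2 s hs.2 t ht.2⟩,
        inf_le_inf hsx hty⟩
    · intro x hx; exact ⟨x, hx, le_rfl⟩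
    · intro x hx; exact ⟨x, hx, le_rfl⟩
    · rintro z ⟨g, ⟨q, hq, hqg⟩, h, ⟨r, hr, hrh⟩, hfz⟩
      have hfqr : f q r ∈ P := hPQ ⟨q, hq.1, r, hr.1, le_rfl⟩
      have hfqrA : f q r ∈ A' := hcl q hq.2 r hr.2
      have hfqrQ : f q r ∈ Q := hPA ⟨hfqr, hfqrA⟩
      exact hQup _ z hfqrQ (((mono1 q g r hqg).trans (mono2 g r h hrh)).trans hfz)
  -- Zorn's lemma
  have hub : ∀ c ⊆ 𝒞, IsChain (· ≤ ·) c → ∀ y ∈ c, ∃ ub ∈ 𝒞, ∀ z ∈ c, z ≤ ub := by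
    intro c hc𝒞 hchain y hy
    refine ⟨(⋃ p ∈ c, p.1, ⋃ p ∈ c, p.2), ⟨?_, ?_, ?_, ?_, ?_⟩, ?_⟩
    · refine ⟨Set.mem_biUnion hy (hc𝒞 hy).1.1, ?_, ?_⟩
      · rintro x z hx hxz
        obtain ⟨_, ⟨p, rfl⟩, _, ⟨hp, rfl⟩, hxp⟩ := hx
        exact Set.mem_biUnion hp ((hc𝒞 hp).1.2.1 x z hxp hxz)
      · rintro x z hx hz
        obtain ⟨_, ⟨p, rfl⟩, _, ⟨hp, rfl⟩, hxp⟩ := hx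
        obtain ⟨_, ⟨q, rfl⟩, _, ⟨hq, rfl⟩, hzq⟩ := hz
        rcases eq_or_ne p q with rfl | hpq
        · exact Set.mem_biUnion hp ((hc𝒞 hp).1.2.2 x z hxp hzq)
        rcases hchain hp hq hpq with hle | hle
        · exact Set.mem_biUnion hq ((hc𝒞 hq).1.2.2 x z (hle.1 hxp) hzq)
        · exact Set.mem_biUnion hp ((hc𝒞 hp).1.2.2 x z hxp (hle.1 hzq))
    · refine ⟨Set.mem_biUnion hy (hc𝒞 hy).2.1.1, ?_, ?_⟩
      · rintro x z hx hxz
        obtain ⟨_, ⟨p, rfl⟩, _, ⟨hp, rfl⟩, hxp⟩ := hx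
        exact Set.mem_biUnion hp ((hc𝒞 hp).2.1.2.1 x z hxp hxz)
      · rintro x z hx hz
        obtain ⟨_, ⟨p, rfl⟩, _, ⟨hp, rfl⟩, hxp⟩ := hx
        obtain ⟨_, ⟨q, rfl⟩, _, ⟨hq, rfl⟩, hzq⟩ := hz
        rcases eq_or_ne p q with rfl | hpq
        · exact Set.mem_biUnion hp ((hc𝒞 hp).2.1.2.2 x z hxp hzq)
        rcases hchain hp hq hpq with hle | hle
        · exact Set.mem_biUnion hq ((hc𝒞 hq).2.1.2.2 x z (hle.2 hxp) hzq)
        · exact Set.mem_biUnion hp ((hc𝒞 hp).2.1.2.2 x z hxp (hle.2 hzq))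
    · intro x hx; exact Set.mem_biUnion hy ((hc𝒞 hy).2.2.1 hx)
    · intro x hx; exact Set.mem_biUnion hy ((hc𝒞 hy).2.2.2.1 hx)
    · rintro z ⟨g, hg, h, hh, hfz⟩
      obtain ⟨_, ⟨p, rfl⟩, _, ⟨hp, rfl⟩, hgp⟩ := hg
      obtain ⟨_, ⟨q, rfl⟩, _, ⟨hq, rfl⟩, hhq⟩ := hh
      rcases eq_or_ne p q with rfl | hpq
      · exact (hc𝒞 hp).2.2.2.2 ⟨g, hgp, h, hhq, hfz⟩
      rcases hchain hp hq hpq with hle | hle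
      · exact (hc𝒞 hq).2.2.2.2 ⟨g, hle.1 hgp, h, hhq, hfz⟩
      · exact (hc𝒞 hp).2.2.2.2 ⟨g, hgp, h, hle.2 hhq, hfz⟩
    · intro p hp
      exact ⟨fun x hx => Set.mem_biUnion hp hx, fun x hx => Set.mem_biUnion hp hx⟩
  obtain ⟨m, -, hm⟩ := zorn_le_nonempty₀ 𝒞 hub (F₀, G₀) h₀
  have hm𝒞 := hm.1
  have hmax : ∀ p ∈ 𝒞, m ≤ p → p ≤ m := fun p hp hle => hm.2 hp hle
  obtain ⟨hF, hG, hQ₁F, hR₁G, hFG⟩ := hm𝒞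
  -- properness
  have hFproper : m.1 ≠ Set.univ := by
    intro h
    apply hQbot
    exact hFG ⟨⊥, h ▸ Set.mem_univ ⊥, ⊤, hG.1, le_of_eq (hf3 ⊤)⟩
  have hGproper : m.2 ≠ Set.univ := by
    intro h
    apply hQbot
    exact hFG ⟨⊤, hF.1, ⊥, h ▸ Set.mem_univ ⊥, le_of_eq (hf4 ⊤)⟩
  -- the key maximality consequence: adding an element x ∉ m.1 breaks the f-condition
  have keyA : ∀ x : A, x ∉ m.1 → ∃ a ∈ m.1, ∃ h ∈ m.2, f (a ⊓ x) h ∉ Q := by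
    intro x hx
    by_contra hcon
    push_neg at hcon
    set Fx : Set A := {z | ∃ a ∈ m.1, a ⊓ x ≤ z} with hFx
    have hFxmem : (Fx, m.2) ∈ 𝒞 := by
      refine ⟨⟨⟨⊤, hF.1, inf_le_left⟩, ?_, ?_⟩, hG, fun z hz => ?_, hR₁G, ?_⟩
      · rintro u v ⟨a, ha, hau⟩ huv; exact ⟨a, ha, hau.trans huv⟩
      · rintro u v ⟨a, ha, hau⟩ ⟨b, hb, hbv⟩
        refine ⟨a ⊓ b, hF.2.2 a b ha hb, ?_⟩
        calc a ⊓ b ⊓ x ≤ (a ⊓ x) ⊓ (b ⊓ x) := by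
              simp only [le_inf_iff]
              exact ⟨⟨inf_le_left.trans inf_le_left, inf_le_right⟩,
                ⟨inf_le_left.trans inf_le_right, inf_le_right⟩⟩
          _ ≤ u ⊓ v := inf_le_inf hau hbv
      · exact ⟨z, hQ₁F hz, inf_le_left.trans le_rfl⟩
      · rintro z ⟨g, ⟨a, ha, hag⟩, h, hh, hfz⟩
        exact hQup _ z (hcon a ha h hh) ((mono1 _ _ _ hag).trans hfz)
    have hle : m ≤ (Fx, m.2) :=
      ⟨fun u hu => ⟨u, hu, inf_le_left⟩, le_rfl⟩
    have := hmax _ hFxmem hle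
    exact hx (this.1 ⟨⊤, hF.1, by simpa using inf_le_right⟩)
  have keyB : ∀ x : B, x ∉ m.2 → ∃ a ∈ m.1, ∃ h ∈ m.2, f a (h ⊓ x) ∉ Q := by
    intro x hx
    by_contra hcon
    push_neg at hcon
    set Gx : Set B := {z | ∃ h ∈ m.2, h ⊓ x ≤ z} with hGx
    have hGxmem : (m.1, Gx) ∈ 𝒞 := by
      refine ⟨hF, ⟨⟨⊤, hG.1, inf_le_left⟩, ?_, ?_⟩, hQ₁F, fun z hz => ?_, ?_⟩
      · rintro u v ⟨a, ha, hau⟩ huv; exact ⟨a, ha, hau.trans huv⟩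
      · rintro u v ⟨a, ha, hau⟩ ⟨b, hb, hbv⟩
        refine ⟨a ⊓ b, hG.2.2 a b ha hb, ?_⟩
        calc a ⊓ b ⊓ x ≤ (a ⊓ x) ⊓ (b ⊓ x) := by
              simp only [le_inf_iff]
              exact ⟨⟨inf_le_left.trans inf_le_left, inf_le_right⟩,
                ⟨inf_le_left.trans inf_le_right, inf_le_right⟩⟩
          _ ≤ u ⊓ v := inf_le_inf hau hbv
      · exact ⟨z, hR₁G hz, inf_le_left⟩
      · rintro z ⟨g, hg, h, ⟨a, ha, hah⟩, hfz⟩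
        exact hQup _ z (hcon g hg a ha) ((mono2 _ _ _ hah).trans hfz)
    have hle : m ≤ (m.1, Gx) :=
      ⟨le_rfl, fun u hu => ⟨u, hu, inf_le_left⟩⟩
    have := hmax _ hGxmem hle
    exact hx (this.2 ⟨⊤, hG.1, by simpa using inf_le_right⟩)
  -- primality of m.1
  have hFprime : ∀ x y : A, x ⊔ y ∈ m.1 → x ∈ m.1 ∨ y ∈ m.1 := by
    intro x y hxy
    by_contra hcon
    push_neg at hcon
    obtain ⟨a, ha, h, hh, hax⟩ := keyA x hcon.1
    obtain ⟨b, hb, h', hh', hby⟩ := keyA y hcon.2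
    set c := a ⊓ b with hc
    set t := h ⊓ h' with ht
    have hcm : c ∈ m.1 := hF.2.2 a b ha hb
    have htm : t ∈ m.2 := hG.2.2 h h' hh hh'
    have h1 : f (c ⊓ (x ⊔ y)) t ∈ Q :=
      hFG ⟨c ⊓ (x ⊔ y), hF.2.2 c (x ⊔ y) hcm hxy, t, htm, le_rfl⟩
    have h2 : c ⊓ (x ⊔ y) = (c ⊓ x) ⊔ (c ⊓ y) := inf_sup_left c x y
    rw [h2, hf1] at h1
    rcases hQprime _ _ h1 with h3 | h3
    · exact hax (hQup _ _ h3 ((mono1 _ _ _ (inf_le_inf inf_le_left le_rfl)).trans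
        (mono2 _ _ _ inf_le_left)))
    · exact hby (hQup _ _ h3 ((mono1 _ _ _ (inf_le_inf inf_le_right le_rfl)).trans
        (mono2 _ _ _ inf_le_right)))
  -- primality of m.2
  have hGprime : ∀ x y : B, x ⊔ y ∈ m.2 → x ∈ m.2 ∨ y ∈ m.2 := by
    intro x y hxy
    by_contra hcon
    push_neg at hcon
    obtain ⟨a, ha, h, hh, hax⟩ := keyB x hcon.1
    obtain ⟨b, hb, h', hh', hby⟩ := keyB y hcon.2
    set c := a ⊓ b with hc
    set t := h ⊓ h' with ht
    have hcm : c ∈ m.1 := hF.2.2 a b ha hb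
    have htm : t ∈ m.2 := hG.2.2 h h' hh hh'
    have h1 : f c (t ⊓ (x ⊔ y)) ∈ Q :=
      hFG ⟨c, hcm, t ⊓ (x ⊔ y), hG.2.2 t (x ⊔ y) htm hxy, le_rfl⟩
    have h2 : t ⊓ (x ⊔ y) = (t ⊓ x) ⊔ (t ⊓ y) := inf_sup_left t x y
    rw [h2, hf2] at h1
    rcases hQprime _ _ h1 with h3 | h3
    · exact hax (hQup _ _ h3 ((mono1 _ _ _ inf_le_left).trans
        (mono2 _ _ _ (inf_le_inf inf_le_left le_rfl))))
    · exact hby (hQup _ _ h3 ((mono1 _ _ _ inf_le_right).trans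
        (mono2 _ _ _ (inf_le_inf inf_le_right le_rfl))))
  exact ⟨m.1, m.2, ⟨hF, hFproper, hFprime⟩, ⟨hG, hGproper, hGprime⟩,
    hQ₁F, hR₁G, hFG⟩
end
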